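/- There exists a constant c_d > 0 depending only on the dimension d with the following property. Let E ∈ ℝ, ε > 0, γ > 0 with 2·c_d·γ ≤ ε, let u ∈ [−1,1]^Λ, and let Λ' ⊆ Λ be a set of positions such that every x ∈ Λ' satisfies both |√(u_x²+1) − E| ≥ ε and |√(u_x²+1) + E| ≥ ε; set R = Λ ∖ Λ'. Let D be the restriction of H(u) to the sites Λ' × {1,2}, let B be the block of H(u) with rows indexed by R × {1,2} and columns by Λ' × {1,2}, and let C = Bᵀ. Then for every λ ∈ ℝ with |λ − E| ≤ ε/2 and all positions x, y ∈ R, the 2×2 block of B(D − λ·I)⁻¹C between x and y has operator norm at most (c_d·γ/ε)^{max(|x−y|, 2)}·ε. -/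

import Mathlib

open Matrix

/-- The ℓ¹ distance `|x-y| = Σᵢ |xᵢ-yᵢ|` on `ℤ^d`, as a natural number. -/
def dist1 {d : ℕ} (x y : Fin d → ℤ) : ℕ := ∑ i, (x i - y i).natAbs

/-- The random block Hamiltonian: diagonal 2×2 block `[[u_x,1],[1,-u_x]]` at each
position `x ∈ Λ`, and block `γ·I₂` between nearest-neighbor positions. -/
noncomputable def Ham (d : ℕ) (γ : ℝ) (Λ : Finset (Fin d → ℤ)) (u : {x // x ∈ Λ} → ℝ) :
    Matrix ({x // x ∈ Λ} × Fin 2) ({x // x ∈ Λ} × Fin 2) ℝ := fun s t =>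
  if s.1 = t.1 then
    (if s.2 = t.2 then (if s.2 = 0 then u s.1 else -u s.1) else 1)
  else if dist1 (s.1 : Fin d → ℤ) (t.1 : Fin d → ℤ) = 1 then
    (if s.2 = t.2 then γ else 0)
  else 0

/-- The operator norm of a real matrix acting between Euclidean spaces. -/
noncomputable def opNorm {m n : Type*} [Fintype m] [Fintype n] [DecidableEq n]
    (M : Matrix m n ℝ) : ℝ :=
  ‖LinearMap.toContinuousLinearMap (Matrix.toEuclideanLin M)‖

/-- The 2×2 block of a site-indexed matrix between positions `x` and `y`. -/
def blk {α β : Type*} (M : Matrix (α × Fin 2) (β × Fin 2) ℝ) (x : α) (y : β) :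
    Matrix (Fin 2) (Fin 2) ℝ := fun i j => M (x, i) (y, j)

/-- Restriction `D` of `H(u)` to the sites over `Λ' ⊆ Λ`. -/
noncomputable def Dmat (d : ℕ) (γ : ℝ) (Λ Λ' : Finset (Fin d → ℤ)) (hsub : Λ' ⊆ Λ)
    (u : {x // x ∈ Λ} → ℝ) :
    Matrix ({x // x ∈ Λ'} × Fin 2) ({x // x ∈ Λ'} × Fin 2) ℝ :=
  (Ham d γ Λ u).submatrix
    (fun s => ((⟨s.1.1, hsub s.1.2⟩ : {x // x ∈ Λ}), s.2))
    (fun s => ((⟨s.1.1, hsub s.1.2⟩ : {x // x ∈ Λ}), s.2))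

/-- The block `B` of `H(u)` with rows indexed by the sites over `R = Λ \ Λ'` and
columns by the sites over `Λ'`. -/
noncomputable def Bmat (d : ℕ) (γ : ℝ) (Λ Λ' : Finset (Fin d → ℤ)) (hsub : Λ' ⊆ Λ)
    (u : {x // x ∈ Λ} → ℝ) :
    Matrix ({x // x ∈ Λ \ Λ'} × Fin 2) ({x // x ∈ Λ'} × Fin 2) ℝ :=
  (Ham d γ Λ u).submatrix
    (fun s => ((⟨s.1.1, (Finset.mem_sdiff.mp s.1.2).1⟩ : {x // x ∈ Λ}), s.2))
    (fun s => ((⟨s.1.1, hsub s.1.2⟩ : {x // x ∈ Λ}), s.2))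

/-! ### auxiliary lemmas -/

attribute [local instance] Matrix.linftyOpNormedAddCommGroup Matrix.linftyOpNormedRing
  Matrix.linftyOpNormedSpace

lemma dist1_self {d : ℕ} (x : Fin d → ℤ) : dist1 x x = 0 := by simp [dist1]

lemma dist1_comm {d : ℕ} (x y : Fin d → ℤ) : dist1 x y = dist1 y x := by
  unfold dist1
  exact Finset.sum_congr rfl fun i _ => by rw [← Int.natAbs_neg, neg_sub]

lemma dist1_triangle {d : ℕ} (x y z : Fin d → ℤ) : dist1 x z ≤ dist1 x y + dist1 y z := by
  unfold dist1
  rw [← Finset.sum_add_distrib]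
  refine Finset.sum_le_sum fun i _ => ?_
  have h : x i - z i = (x i - y i) + (y i - z i) := by ring
  rw [h]
  exact Int.natAbs_add_le _ _

lemma card_nbhd {d : ℕ} (x : Fin d → ℤ) (F : Finset (Fin d → ℤ)) :
    (F.filter fun z => dist1 x z = 1).card ≤ 2 * d := by
  classical
  have hsub : (F.filter fun z => dist1 x z = 1) ⊆
      (Finset.univ : Finset (Fin d × Bool)).image
        (fun p => Function.update x p.1 (x p.1 + if p.2 then 1 else -1)) := by
    intro z hz
    obtain ⟨-, hz1⟩ := Finset.mem_filter.mp hz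
    obtain ⟨i, -, hi0⟩ := Finset.exists_ne_zero_of_sum_ne_zero (by
      rw [show (∑ j, (x j - z j).natAbs) = 1 from hz1]; norm_num : (∑ j, (x j - z j).natAbs) ≠ 0)
    have hle : (x i - z i).natAbs ≤ 1 := by
      rw [← hz1]
      exact Finset.single_le_sum (f := fun j => (x j - z j).natAbs)
        (fun _ _ => Nat.zero_le _) (Finset.mem_univ i)
    have hi1 : (x i - z i).natAbs = 1 := Nat.le_antisymm hle (Nat.one_le_iff_ne_zero.mpr hi0)
    have hrest : ∀ j, j ≠ i → (x j - z j).natAbs = 0 := by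
      have h2 : (x i - z i).natAbs + ∑ j ∈ Finset.univ.erase i, (x j - z j).natAbs = 1 := by
        rw [Finset.add_sum_erase Finset.univ (fun j => (x j - z j).natAbs)
          (Finset.mem_univ i)]
        exact hz1
      have hsum : ∑ j ∈ Finset.univ.erase i, (x j - z j).natAbs = 0 := by omega
      intro j hj
      exact (Finset.sum_eq_zero_iff).mp hsum j (Finset.mem_erase.mpr ⟨hj, Finset.mem_univ j⟩)
    have hzi : x i - z i = 1 ∨ x i - z i = -1 := by
      rcases Int.natAbs_eq (x i - z i) with h | h <;> rw [hi1] at h <;> [left; right] <;> omega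
    have hse : ∀ j, j ≠ i → z j = x j := by
      intro j hj
      have := hrest j hj
      omega
    rcases hzi with h | h
    · refine Finset.mem_image.mpr ⟨(i, false), Finset.mem_univ _, ?_⟩
      funext j
      by_cases hj : j = i
      · subst hj; rw [Function.update_self]; simp; omega
      · rw [Function.update_of_ne hj]; exact (hse j hj).symm
    · refine Finset.mem_image.mpr ⟨(i, true), Finset.mem_univ _, ?_⟩
      funext j
      by_cases hj : j = i
      · subst hj; rw [Function.update_self]; simp; omega
      · rw [Function.update_of_ne hj]; exact (hse j hj).symm
  calc (F.filter fun z => dist1 x z = 1).card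
      ≤ _ := Finset.card_le_card hsub
    _ ≤ (Finset.univ : Finset (Fin d × Bool)).card := Finset.card_image_le
    _ = 2 * d := by simp [Finset.card_univ]; ring

lemma sum_nbhd_le {d : ℕ} (F : Finset (Fin d → ℤ)) (a : Fin d → ℤ) {w : ℝ} (hw : 0 ≤ w) :
    (∑ z : {z // z ∈ F}, if dist1 a z.1 = 1 then w else 0) ≤ (2 * d) * w := by
  classical
  rw [← Finset.sum_filter, Finset.sum_const, nsmul_eq_mul]
  refine mul_le_mul_of_nonneg_right ?_ hw
  have h1 : (Finset.univ.filter fun z : {z // z ∈ F} => dist1 a z.1 = 1).card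
      ≤ (F.filter fun z => dist1 a z = 1).card := by
    refine Finset.card_le_card_of_injOn (fun z => z.1) ?_ ?_
    · intro z hz
      exact Finset.mem_filter.mpr ⟨z.2, (Finset.mem_filter.mp hz).2⟩
    · intro a _ b _ h
      exact Subtype.ext h
  have h2 := card_nbhd a F
  exact_mod_cast le_trans h1 h2

lemma opNorm_le_of_entries (M : Matrix (Fin 2) (Fin 2) ℝ) {K : ℝ} (hK : 0 ≤ K)
    (h : ∀ i j, |M i j| ≤ K) : opNorm M ≤ 2 * K := by
  unfold opNorm
  refine ContinuousLinearMap.opNorm_le_bound _ (by positivity) fun v => ?_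
  rw [LinearMap.coe_toContinuousLinearMap']
  set w := Matrix.toEuclideanLin M v with hw
  have hwe : ∀ i, w i = M i 0 * v 0 + M i 1 * v 1 := by
    intro i
    have : w i = Matrix.mulVec M (fun j => v j) i := rfl
    rw [this, Matrix.mulVec, dotProduct, Fin.sum_univ_two]
  have hv : ∀ j, |v j| ≤ ‖v‖ := by
    intro j
    have h1 : ‖v‖ = Real.sqrt (∑ i, ‖v i‖ ^ 2) := EuclideanSpace.norm_eq v
    have h2 : |v j| = Real.sqrt (‖v j‖ ^ 2) := by
      rw [Real.sqrt_sq_eq_abs, abs_norm, Real.norm_eq_abs]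
    rw [h1, h2]
    refine Real.sqrt_le_sqrt ?_
    exact Finset.single_le_sum (f := fun i => ‖v i‖ ^ 2) (fun _ _ => sq_nonneg _)
      (Finset.mem_univ j)
  have hnw : ‖w‖ = Real.sqrt (∑ i, ‖w i‖ ^ 2) := EuclideanSpace.norm_eq w
  have hb : ∀ i, |w i| ≤ K * (|v 0| + |v 1|) := by
    intro i
    rw [hwe i]
    calc |M i 0 * v 0 + M i 1 * v 1| ≤ |M i 0| * |v 0| + |M i 1| * |v 1| := by
          refine (abs_add_le _ _).trans ?_
          rw [abs_mul, abs_mul]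
      _ ≤ K * |v 0| + K * |v 1| := by
          gcongr <;> [exact h i 0; exact h i 1]
      _ = K * (|v 0| + |v 1|) := by ring
  have hsq : ∑ i, ‖w i‖ ^ 2 ≤ (2 * K * ‖v‖) ^ 2 := by
    rw [Fin.sum_univ_two]
    have h0 := hb 0
    have h1 := hb 1
    have hv0 := hv 0
    have hv1 := hv 1
    have ha0 : |v 0| ≥ 0 := abs_nonneg _
    have ha1 : |v 1| ≥ 0 := abs_nonneg _
    have hnv : 0 ≤ ‖v‖ := norm_nonneg _
    have e0 : ‖w 0‖ = |w 0| := Real.norm_eq_abs _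
    have e1 : ‖w 1‖ = |w 1| := Real.norm_eq_abs _
    rw [e0, e1]
    have hveq : ‖v‖ ^ 2 = |v 0| ^ 2 + |v 1| ^ 2 := by
      have h1' : ‖v‖ = Real.sqrt (∑ i, ‖v i‖ ^ 2) := EuclideanSpace.norm_eq v
      rw [h1', Real.sq_sqrt (by positivity), Fin.sum_univ_two, Real.norm_eq_abs,
        Real.norm_eq_abs]
    have q0 : |w 0| ^ 2 ≤ (K * (|v 0| + |v 1|)) ^ 2 := pow_le_pow_left₀ (abs_nonneg _) h0 2
    have q1 : |w 1| ^ 2 ≤ (K * (|v 0| + |v 1|)) ^ 2 := pow_le_pow_left₀ (abs_nonneg _) h1 2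
    nlinarith [sq_nonneg (|v 0| - |v 1|), sq_nonneg K, mul_nonneg hK hnv]
  calc ‖w‖ ≤ Real.sqrt ((2 * K * ‖v‖) ^ 2) := by rw [hnw]; exact Real.sqrt_le_sqrt hsq
    _ = 2 * K * ‖v‖ := Real.sqrt_sq (by positivity)

lemma linfty_norm_le {ι : Type*} [Fintype ι] [DecidableEq ι] (X : Matrix ι ι ℝ) {C : ℝ}
    (hC : 0 ≤ C) (h : ∀ s, ∑ t, |X s t| ≤ C) : ‖X‖ ≤ C := by
  rw [Matrix.linfty_opNorm_def]
  have key : (Finset.univ : Finset ι).sup (fun i => ∑ j, ‖X i j‖₊) ≤ C.toNNReal := by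
    refine Finset.sup_le fun i _ => ?_
    have := h i
    rw [← NNReal.coe_le_coe]
    push_cast
    rw [Real.coe_toNNReal _ hC]
    simpa [Real.norm_eq_abs] using this
  calc ((Finset.univ.sup fun i => ∑ j, ‖X i j‖₊ : NNReal) : ℝ)
      ≤ (C.toNNReal : ℝ) := by exact_mod_cast key
    _ ≤ C := by rw [Real.coe_toNNReal _ hC]

lemma abs_entry_le_linfty {ι : Type*} [Fintype ι] [DecidableEq ι] (X : Matrix ι ι ℝ)
    (s t : ι) : |X s t| ≤ ‖X‖ := by
  rw [Matrix.linfty_opNorm_def]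
  calc |X s t| = ((‖X s t‖₊ : NNReal) : ℝ) := by simp [Real.norm_eq_abs]
    _ ≤ ((∑ j, ‖X s j‖₊ : NNReal) : ℝ) := by
        exact_mod_cast Finset.single_le_sum (f := fun j => ‖X s j‖₊)
          (fun _ _ => zero_le) (Finset.mem_univ t)
    _ ≤ _ := by
        have key : (∑ j, ‖X s j‖₊) ≤ Finset.univ.sup (fun i => ∑ j, ‖X i j‖₊) :=
          Finset.le_sup (f := fun i => ∑ j, ‖X i j‖₊) (Finset.mem_univ s)
        exact_mod_cast key

set_option maxHeartbeats 2000000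
set_option synthInstance.maxHeartbeats 200000

/-- there is `c_d > 0` such that if `2·c_d·γ ≤ ε` and all positions of
`Λ' ⊆ Λ` are `ε`-nonresonant with `E`, then for `|λ-E| ≤ ε/2` the 2×2 blocks of
`B(D-λ·I)⁻¹C` (with `C = Bᵀ`) between positions `x, y ∈ R = Λ ∖ Λ'` are bounded by
`(c_d·γ/ε)^{max(|x-y|,2)}·ε`. -/
theorem schur_correction_block_decay (d : ℕ) (hd : 1 ≤ d) :
    ∃ c : ℝ, 0 < c ∧
      ∀ (γ E ε : ℝ), 0 < γ → 0 < ε → 2 * c * γ ≤ ε →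
      ∀ (Λ : Finset (Fin d → ℤ)), (∃ a b, Λ = Finset.Icc a b) →
      ∀ (u : {x // x ∈ Λ} → ℝ), (∀ x, u x ∈ Set.Icc (-1 : ℝ) 1) →
      ∀ (Λ' : Finset (Fin d → ℤ)) (hsub : Λ' ⊆ Λ),
      (∀ x : {x // x ∈ Λ'},
          ε ≤ |Real.sqrt (u ⟨x.1, hsub x.2⟩ ^ 2 + 1) - E| ∧
          ε ≤ |Real.sqrt (u ⟨x.1, hsub x.2⟩ ^ 2 + 1) + E|) →
      ∀ lam : ℝ, |lam - E| ≤ ε / 2 →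
      ∀ x y : {x // x ∈ Λ \ Λ'},
        opNorm (blk (Bmat d γ Λ Λ' hsub u * (Dmat d γ Λ Λ' hsub u - lam • 1)⁻¹ *
            (Bmat d γ Λ Λ' hsub u)ᵀ) x y) ≤
          (c * γ / ε) ^ max (dist1 (x : Fin d → ℤ) (y : Fin d → ℤ)) 2 * ε := by
  classical
  refine ⟨16 * d, by positivity, ?_⟩
  intro γ E ε hγ hε hcγ Λ hrect u hu Λ' hsub hnr lam hlam x y
  set v : {z // z ∈ Λ'} → ℝ := fun z => u ⟨z.1, hsub z.2⟩ with hv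
  set AinvB : {z // z ∈ Λ'} → Matrix (Fin 2) (Fin 2) ℝ :=
    fun z => (lam ^ 2 - v z ^ 2 - 1)⁻¹ • !![-(v z) - lam, -1; -1, v z - lam] with hAinvB
  set M : Matrix ({z // z ∈ Λ'} × Fin 2) ({z // z ∈ Λ'} × Fin 2) ℝ :=
    Dmat d γ Λ Λ' hsub u - lam • 1 with hMdef
  set Ainv : Matrix ({z // z ∈ Λ'} × Fin 2) ({z // z ∈ Λ'} × Fin 2) ℝ :=
    fun s t => if s.1 = t.1 then AinvB s.1 s.2 t.2 else 0 with hAinvdef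
  set S : Matrix ({z // z ∈ Λ'} × Fin 2) ({z // z ∈ Λ'} × Fin 2) ℝ :=
    fun s t => if dist1 (s.1.1 : Fin d → ℤ) (t.1.1 : Fin d → ℤ) = 1
      then γ * AinvB s.1 s.2 t.2 else 0 with hSdef
  set r : ℝ := 8 * d * γ / ε with hr
  have hd1 : (1 : ℝ) ≤ d := by exact_mod_cast hd
  have hrpos : 0 < r := by positivity
  have hr14 : r ≤ 1 / 4 := by
    rw [hr, div_le_div_iff₀ hε (by norm_num)]
    nlinarith
  -- per-site facts
  have hsite : ∀ z : {z // z ∈ Λ'},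
      (lam ^ 2 - v z ^ 2 - 1 ≠ 0) ∧ (∀ i j, |AinvB z i j| ≤ 2 / ε) := by
    intro z
    obtain ⟨h1, h2⟩ := hnr z
    set sq : ℝ := Real.sqrt (v z ^ 2 + 1) with hsqdef
    have h1' : ε ≤ |sq - E| := h1
    have h2' : ε ≤ |sq + E| := h2
    have hsq1 : 1 ≤ sq := by
      have hh : Real.sqrt 1 ≤ sq := Real.sqrt_le_sqrt (by nlinarith [sq_nonneg (v z)])
      rwa [Real.sqrt_one] at hh
    have hsqsq : sq ^ 2 = v z ^ 2 + 1 := Real.sq_sqrt (by positivity)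
    have ha : ε / 2 ≤ |sq - lam| := by
      have h3 := abs_sub_le sq lam E
      linarith
    have hb : ε / 2 ≤ |sq + lam| := by
      have h3 : |sq + E| ≤ |sq + lam| + |E - lam| := by
        rw [show sq + E = (sq + lam) + (E - lam) by ring]
        exact abs_add_le _ _
      have h4 : |E - lam| = |lam - E| := abs_sub_comm E lam
      linarith
    have hdet : |lam ^ 2 - v z ^ 2 - 1| = |sq - lam| * |sq + lam| := by
      rw [← abs_mul, show (sq - lam) * (sq + lam) = -(lam ^ 2 - v z ^ 2 - 1) by
        linear_combination hsqsq, abs_neg]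
    have hdetpos : 0 < |lam ^ 2 - v z ^ 2 - 1| := by
      rw [hdet]
      have := mul_pos (lt_of_lt_of_le (by linarith) ha) (lt_of_lt_of_le (by linarith) hb)
      linarith
    have hdetne : lam ^ 2 - v z ^ 2 - 1 ≠ 0 := by
      intro h
      rw [h] at hdetpos
      simp at hdetpos
    refine ⟨hdetne, ?_⟩
    have hmaxle : sq + |lam| ≤ max |sq - lam| |sq + lam| := by
      rcases abs_cases lam with ⟨h5, h6⟩ | ⟨h5, h6⟩
      · refine le_max_of_le_right ?_
        rw [abs_of_nonneg (show (0:ℝ) ≤ sq + lam by linarith)]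
        linarith
      · refine le_max_of_le_left ?_
        rw [abs_of_nonneg (show (0:ℝ) ≤ sq - lam by linarith)]
        linarith
    have key : ∀ e : ℝ, |e| ≤ sq + |lam| → |(lam ^ 2 - v z ^ 2 - 1)⁻¹ * e| ≤ 2 / ε := by
      intro e he
      rw [abs_mul, abs_inv, hdet]
      set a : ℝ := |sq - lam|
      set b : ℝ := |sq + lam|
      have hapos : 0 < a := lt_of_lt_of_le (by linarith) ha
      have hbpos : 0 < b := lt_of_lt_of_le (by linarith) hb
      rw [inv_mul_eq_div, div_le_div_iff₀ (by positivity) hε]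
      rcases le_total a b with hc | hc
      · have heb : |e| ≤ b := le_trans he (by
          rw [max_eq_right hc] at hmaxle
          exact hmaxle)
        nlinarith [abs_nonneg e]
      · have hea : |e| ≤ a := le_trans he (by
          rw [max_eq_left hc] at hmaxle
          exact hmaxle)
        nlinarith [abs_nonneg e]
    have hvsq : |v z| ≤ sq := by
      rw [← Real.sqrt_sq_eq_abs, hsqdef]
      exact Real.sqrt_le_sqrt (by linarith)
    intro i j
    have habs0 : 0 ≤ |lam| := abs_nonneg _
    fin_cases i <;> fin_cases j <;>
      simp only [hAinvB, Matrix.smul_apply, smul_eq_mul, Fin.mk_zero, Fin.mk_one,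
        Matrix.cons_val_zero, Matrix.cons_val_one, Matrix.head_cons, Matrix.cons_val',
        Matrix.empty_val', Matrix.cons_val_fin_one, Matrix.head_fin_const,
        Matrix.of_apply] <;>
      refine key _ ?_
    · calc |-(v z) - lam| ≤ |v z| + |lam| := by
            rw [show -(v z) - lam = -(v z + lam) by ring, abs_neg]
            exact abs_add_le _ _
        _ ≤ sq + |lam| := by linarith
    · rw [abs_neg, abs_one]
      linarith
    · rw [abs_neg, abs_one]
      linarith
    · calc |v z - lam| ≤ |v z| + |lam| := abs_sub _ _
        _ ≤ sq + |lam| := by linarith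
  -- entries of M
  have hMdiag : ∀ (z : {z // z ∈ Λ'}) (k j : Fin 2),
      M (z, k) (z, j) = !![v z - lam, 1; 1, -(v z) - lam] k j := by
    intro z k j
    rw [hMdef]
    simp only [Matrix.sub_apply, Matrix.smul_apply, Matrix.one_apply, Dmat,
      Matrix.submatrix_apply, Ham, smul_eq_mul]
    fin_cases k <;> fin_cases j <;>
      simp [Prod.ext_iff, hv] <;> ring
  have hMoff : ∀ (z w : {z // z ∈ Λ'}) (k j : Fin 2), z ≠ w →
      M (z, k) (w, j) = if dist1 (z.1 : Fin d → ℤ) (w.1 : Fin d → ℤ) = 1 ∧ k = j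
        then γ else 0 := by
    intro z w k j hzw
    have hzw1 : z.1 ≠ w.1 := fun h => hzw (Subtype.ext h)
    rw [hMdef]
    simp only [Matrix.sub_apply, Matrix.smul_apply, Matrix.one_apply, Dmat,
      Matrix.submatrix_apply, Ham, smul_eq_mul]
    by_cases hdist : dist1 (z.1 : Fin d → ℤ) (w.1 : Fin d → ℤ) = 1 <;>
      by_cases hkj : k = j <;>
      simp [Subtype.ext_iff, Prod.ext_iff, hzw1, hdist, hkj]
  have h2x2 : ∀ z : {z // z ∈ Λ'}, AinvB z * !![v z - lam, 1; 1, -(v z) - lam] = 1 := by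
    intro z
    have hdetne := (hsite z).1
    ext i j
    fin_cases i <;> fin_cases j <;>
      simp only [hAinvB, Matrix.smul_mul, Matrix.smul_apply, smul_eq_mul, Matrix.mul_apply,
        Fin.sum_univ_two, Fin.mk_zero, Fin.mk_one, Matrix.cons_val_zero, Matrix.cons_val_one,
        Matrix.head_cons, Matrix.cons_val', Matrix.empty_val', Matrix.cons_val_fin_one,
        Matrix.head_fin_const, Matrix.of_apply, Matrix.one_apply] <;>
      simp <;> field_simp <;> ring
  have hAM : Ainv * M = 1 + S := by
    ext s t
    obtain ⟨zs, ks⟩ := s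
    obtain ⟨zt, kt⟩ := t
    rw [Matrix.mul_apply, Matrix.add_apply, Fintype.sum_prod_type]
    have hsum : ∀ z : {z // z ∈ Λ'}, (∑ k, Ainv (zs, ks) (z, k) * M (z, k) (zt, kt))
        = if zs = z then ∑ k, AinvB zs ks k * M (z, k) (zt, kt) else 0 := by
      intro z
      by_cases h : zs = z
      · simp [hAinvdef, h]
      · simp [hAinvdef, h]
    rw [Finset.sum_congr rfl fun z _ => hsum z, Finset.sum_ite_eq]
    simp only [Finset.mem_univ, if_true]
    by_cases hzz : zs = zt
    · subst hzz
      rw [Finset.sum_congr rfl fun k _ => by rw [hMdiag]]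
      have h1 : ∑ k, AinvB zs ks k * !![v zs - lam, 1; 1, -(v zs) - lam] k kt
          = (1 : Matrix (Fin 2) (Fin 2) ℝ) ks kt := by
        rw [← Matrix.mul_apply, h2x2]
      rw [h1]
      simp [Matrix.one_apply, Prod.ext_iff, hSdef, dist1_self]
    · rw [Finset.sum_congr rfl fun k _ => by rw [hMoff zs zt k kt hzz]]
      have hone0 : (1 : Matrix ({z // z ∈ Λ'} × Fin 2) ({z // z ∈ Λ'} × Fin 2) ℝ)
          (zs, ks) (zt, kt) = 0 := by
        rw [Matrix.one_apply, if_neg]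
        intro h
        exact hzz (congrArg Prod.fst h)
      rw [hone0, zero_add, hSdef]
      by_cases hdist : dist1 (zs.1 : Fin d → ℤ) (zt.1 : Fin d → ℤ) = 1
      · rw [Finset.sum_congr rfl fun k _ => show AinvB zs ks k *
            (if dist1 (zs.1 : Fin d → ℤ) (zt.1 : Fin d → ℤ) = 1 ∧ k = kt then γ else (0:ℝ))
            = if k = kt then AinvB zs ks k * γ else 0 by
          by_cases hk : k = kt <;> simp [hdist, hk]]
        rw [Finset.sum_ite_eq' Finset.univ kt (fun k => AinvB zs ks k * γ)]
        simp [hdist, mul_comm]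
      · simp [hdist]
  have hSnorm : ‖S‖ ≤ r := by
    refine linfty_norm_le _ (le_of_lt hrpos) fun s => ?_
    obtain ⟨z0, i0⟩ := s
    rw [Fintype.sum_prod_type]
    have hrow : ∀ z : {z // z ∈ Λ'}, (∑ k, |S (z0, i0) (z, k)|)
        ≤ if dist1 (z0.1 : Fin d → ℤ) (z.1 : Fin d → ℤ) = 1 then 4 * γ / ε else 0 := by
      intro z
      by_cases h : dist1 (z0.1 : Fin d → ℤ) (z.1 : Fin d → ℤ) = 1
      · simp only [hSdef, h, if_true]
        rw [Fin.sum_univ_two, abs_mul, abs_mul, abs_of_pos hγ]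
        have b0 := (hsite z0).2 i0 0
        have b1 := (hsite z0).2 i0 1
        calc γ * |AinvB z0 i0 0| + γ * |AinvB z0 i0 1| ≤ γ * (2 / ε) + γ * (2 / ε) := by
              gcongr
          _ = 4 * γ / ε := by ring
      · simp [hSdef, h]
    calc (∑ z : {z // z ∈ Λ'}, ∑ k, |S (z0, i0) (z, k)|)
        ≤ ∑ z : {z // z ∈ Λ'},
            (if dist1 (z0.1 : Fin d → ℤ) (z.1 : Fin d → ℤ) = 1 then 4 * γ / ε else 0) :=
          Finset.sum_le_sum fun z _ => hrow z
      _ ≤ (2 * d) * (4 * γ / ε) := sum_nbhd_le Λ' z0.1 (by positivity)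
      _ = r := by rw [hr]; ring
  have hAinvnorm : ‖Ainv‖ ≤ 4 / ε := by
    refine linfty_norm_le _ (by positivity) fun s => ?_
    obtain ⟨z0, i0⟩ := s
    rw [Fintype.sum_prod_type]
    have hrow : ∀ z : {z // z ∈ Λ'}, (∑ k, |Ainv (z0, i0) (z, k)|)
        = if z0 = z then ∑ k, |AinvB z0 i0 k| else 0 := by
      intro z
      by_cases h : z0 = z <;> simp [hAinvdef, h]
    rw [Finset.sum_congr rfl fun z _ => hrow z, Finset.sum_ite_eq]
    simp only [Finset.mem_univ, if_true]
    rw [Fin.sum_univ_two]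
    have b0 := (hsite z0).2 i0 0
    have b1 := (hsite z0).2 i0 1
    have : 2 / ε + 2 / ε = 4 / ε := by ring
    linarith
  have hone : ‖(1 : Matrix ({z // z ∈ Λ'} × Fin 2) ({z // z ∈ Λ'} × Fin 2) ℝ)‖ ≤ 1 := by
    refine linfty_norm_le _ zero_le_one fun s => ?_
    have h1 : ∀ t, |(1 : Matrix ({z // z ∈ Λ'} × Fin 2) ({z // z ∈ Λ'} × Fin 2) ℝ) s t|
        = if s = t then (1 : ℝ) else 0 := by
      intro t
      rw [Matrix.one_apply]
      split <;> simp
    rw [Finset.sum_congr rfl fun t _ => h1 t]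
    simp
  have hSlt : ‖-S‖ < 1 := by
    rw [norm_neg]
    linarith
  have hpow : ∀ n : ℕ, ‖(-S) ^ n‖ ≤ r ^ n := by
    intro n
    rcases Nat.eq_zero_or_pos n with h | h
    · subst h
      rw [pow_zero, pow_zero]
      exact hone
    · refine (norm_pow_le' _ h).trans ?_
      refine pow_le_pow_left₀ (norm_nonneg _) ?_ n
      rw [norm_neg]; exact hSnorm
  set W : Matrix ({z // z ∈ Λ'} × Fin 2) ({z // z ∈ Λ'} × Fin 2) ℝ := ∑' n, (-S) ^ n
    with hWdef
  have hsummn : Summable fun n : ℕ => ‖(-S) ^ n‖ := by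
    refine Summable.of_nonneg_of_le (fun n => norm_nonneg _) (fun n => ?_)
      (summable_geometric_of_lt_one (by norm_num) (by norm_num : (1:ℝ)/2 < 1))
    exact (hpow n).trans (pow_le_pow_left₀ (le_of_lt hrpos) (by linarith) n)
  have hWnorm : ‖W‖ ≤ 2 := by
    rw [hWdef]
    refine (norm_tsum_le_tsum_norm hsummn).trans ?_
    calc (∑' n, ‖(-S) ^ n‖) ≤ ∑' n : ℕ, ((1:ℝ)/2) ^ n := by
          refine Summable.tsum_le_tsum (fun n => (hpow n).trans
            (pow_le_pow_left₀ (le_of_lt hrpos) (by linarith) n)) hsummn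
            (summable_geometric_of_lt_one (by norm_num) (by norm_num))
      _ = 2 := tsum_geometric_two
  have hWM : (W * Ainv) * M = 1 := by
    rw [mul_assoc, hAM, show (1 : Matrix _ _ ℝ) + S = 1 - (-S) from (sub_neg_eq_add 1 S).symm]
    exact geom_series_mul_neg (-S) hSlt
  have hMinv : M⁻¹ = W * Ainv := Matrix.inv_eq_right_inv (mul_eq_one_comm.mpr hWM)
  have hMinvnorm : ‖M⁻¹‖ ≤ 8 / ε := by
    rw [hMinv]
    calc ‖W * Ainv‖ ≤ ‖W‖ * ‖Ainv‖ := norm_mul_le _ _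
      _ ≤ 2 * (4 / ε) := by
          refine mul_le_mul hWnorm hAinvnorm (norm_nonneg _) (by norm_num)
      _ = 8 / ε := by ring
  have hzero : ∀ n : ℕ, ∀ s t : {z // z ∈ Λ'} × Fin 2,
      n < dist1 (s.1.1 : Fin d → ℤ) (t.1.1 : Fin d → ℤ) → ((-S) ^ n * Ainv) s t = 0 := by
    intro n
    induction n with
    | zero =>
      intro s t h
      rw [pow_zero, one_mul]
      have hne : s.1 ≠ t.1 := by
        intro he
        have he2 : (s.1.1 : Fin d → ℤ) = t.1.1 := congrArg Subtype.val he
        rw [he2, dist1_self] at h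
        omega
      simp [hAinvdef, hne]
    | succ n ih =>
      intro s t h
      rw [pow_succ', mul_assoc, Matrix.mul_apply]
      refine Finset.sum_eq_zero fun w _ => ?_
      by_cases hw : dist1 (s.1.1 : Fin d → ℤ) (w.1.1 : Fin d → ℤ) = 1
      · have hlt : n < dist1 (w.1.1 : Fin d → ℤ) (t.1.1 : Fin d → ℤ) := by
          have htr := dist1_triangle (s.1.1 : Fin d → ℤ) (w.1.1 : Fin d → ℤ)
            (t.1.1 : Fin d → ℤ)
          omega
        rw [ih w t hlt, mul_zero]
      · have hS0 : S s w = 0 := by simp [hSdef, hw]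
        simp [hS0]
  have hMentry : ∀ s t : {z // z ∈ Λ'} × Fin 2,
      |M⁻¹ s t| ≤ 8 / ε * r ^ dist1 (s.1.1 : Fin d → ℤ) (t.1.1 : Fin d → ℤ) := by
    intro s t
    set N := dist1 (s.1.1 : Fin d → ℤ) (t.1.1 : Fin d → ℤ) with hN
    have hSW : (1 + S) * W = 1 := by
      rw [show (1 : Matrix _ _ ℝ) + S = 1 - (-S) from (sub_neg_eq_add 1 S).symm, hWdef]
      exact mul_neg_geom_series (-S) hSlt
    have hgeom : (∑ n ∈ Finset.range N, (-S) ^ n) * (1 + S) = 1 - (-S) ^ N := by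
      have hgs := geom_sum_mul (-S) N
      have h2 : (1 : Matrix _ _ ℝ) + S = -(-S - 1) := by
        rw [neg_sub, sub_neg_eq_add, add_comm]
      rw [h2, mul_neg, hgs, neg_sub]
    have h1 : (1 - (-S) ^ N) * W = ∑ n ∈ Finset.range N, (-S) ^ n := by
      rw [← hgeom, mul_assoc, hSW, mul_one]
    have hrem : M⁻¹ = (∑ n ∈ Finset.range N, ((-S) ^ n * Ainv)) + (-S) ^ N * M⁻¹ := by
      calc M⁻¹ = ((1 - (-S) ^ N) + (-S) ^ N) * (W * Ainv) := by
            rw [sub_add_cancel, one_mul, hMinv]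
        _ = ((1 - (-S) ^ N) * W) * Ainv + (-S) ^ N * (W * Ainv) := by
            rw [add_mul, mul_assoc]
        _ = _ := by rw [h1, Finset.sum_mul, ← hMinv]
    have hentry : M⁻¹ s t = ((-S) ^ N * M⁻¹) s t := by
      conv_lhs => rw [hrem]
      rw [Matrix.add_apply, Matrix.sum_apply]
      rw [Finset.sum_eq_zero fun n hn => hzero n s t (Finset.mem_range.mp hn), zero_add]
    calc |M⁻¹ s t| = |((-S) ^ N * M⁻¹) s t| := by rw [hentry]
      _ ≤ ‖(-S) ^ N * M⁻¹‖ := abs_entry_le_linfty _ _ _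
      _ ≤ ‖(-S) ^ N‖ * ‖M⁻¹‖ := norm_mul_le _ _
      _ ≤ r ^ N * (8 / ε) :=
          mul_le_mul (hpow N) hMinvnorm (norm_nonneg _) (by positivity)
      _ = 8 / ε * r ^ N := by ring
  -- entries of B
  have hBentry : ∀ (w : {z // z ∈ Λ \ Λ'}) (i : Fin 2) (s : {z // z ∈ Λ'} × Fin 2),
      |Bmat d γ Λ Λ' hsub u (w, i) s| ≤
        (if dist1 (w.1 : Fin d → ℤ) (s.1.1 : Fin d → ℤ) = 1 then γ else 0) := by
    intro w i s
    have hwmem := (Finset.mem_sdiff.mp w.2).2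
    have hne : (⟨w.1, (Finset.mem_sdiff.mp w.2).1⟩ : {x // x ∈ Λ}) ≠ ⟨s.1.1, hsub s.1.2⟩ := by
      intro h
      exact hwmem (by
        rw [show w.1 = s.1.1 from congrArg Subtype.val h]
        exact s.1.2)
    simp only [Bmat, Matrix.submatrix_apply, Ham]
    rw [if_neg hne]
    by_cases hdist : dist1 (w.1 : Fin d → ℤ) (s.1.1 : Fin d → ℤ) = 1
    · rw [if_pos hdist, if_pos hdist]
      by_cases hk : i = s.2 <;> simp [hk, abs_of_pos hγ, le_of_lt hγ]
    · rw [if_neg hdist, if_neg hdist]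
      simp
  -- final assembly
  set B := Bmat d γ Λ Λ' hsub u with hB
  set m : ℕ := max (dist1 (x.1 : Fin d → ℤ) (y.1 : Fin d → ℤ)) 2 with hm
  have hm2 : 2 ≤ m := le_max_right _ _
  set C8 : ℝ := 8 / ε * r ^ (m - 2) with hC8
  have hC8nn : 0 ≤ C8 := by positivity
  have hKey : ∀ i j : Fin 2, |(B * M⁻¹ * Bᵀ) (x, i) (y, j)|
      ≤ (2 * d * (2 * γ)) * C8 * (2 * d * (2 * γ)) := by
    intro i j
    rw [Matrix.mul_apply]
    refine (Finset.abs_sum_le_sum_abs _ _).trans ?_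
    have hstep : ∀ t, |(B * M⁻¹) (x, i) t * Bᵀ t (y, j)| ≤
        (∑ s, |B (x, i) s| * |M⁻¹ s t|) * |B (y, j) t| := by
      intro t
      rw [abs_mul, Matrix.transpose_apply]
      refine mul_le_mul_of_nonneg_right ?_ (abs_nonneg _)
      rw [Matrix.mul_apply]
      refine (Finset.abs_sum_le_sum_abs _ _).trans ?_
      exact le_of_eq (Finset.sum_congr rfl fun s _ => abs_mul _ _)
    refine (Finset.sum_le_sum fun t _ => hstep t).trans ?_
    have hre : ∀ t, (∑ s, |B (x, i) s| * |M⁻¹ s t|) * |B (y, j) t|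
        = ∑ s, |B (x, i) s| * |M⁻¹ s t| * |B (y, j) t| := fun t => Finset.sum_mul _ _ _
    rw [Finset.sum_congr rfl fun t _ => hre t]
    have hpt : ∀ t s : {z // z ∈ Λ'} × Fin 2,
        |B (x, i) s| * |M⁻¹ s t| * |B (y, j) t| ≤
        (if dist1 (x.1 : Fin d → ℤ) (s.1.1 : Fin d → ℤ) = 1 then γ else 0) * C8 *
        (if dist1 (y.1 : Fin d → ℤ) (t.1.1 : Fin d → ℤ) = 1 then γ else 0) := by
      intro t s
      by_cases hds : dist1 (x.1 : Fin d → ℤ) (s.1.1 : Fin d → ℤ) = 1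
      · by_cases hdt : dist1 (y.1 : Fin d → ℤ) (t.1.1 : Fin d → ℤ) = 1
        · rw [if_pos hds, if_pos hdt]
          have hM' : |M⁻¹ s t| ≤ C8 := by
            refine (hMentry s t).trans ?_
            rw [hC8]
            refine mul_le_mul_of_nonneg_left ?_ (by positivity)
            refine pow_le_pow_of_le_one (le_of_lt hrpos) (by linarith) ?_
            have t1 := dist1_triangle (x.1 : Fin d → ℤ) (s.1.1 : Fin d → ℤ)
              (y.1 : Fin d → ℤ)
            have t2 := dist1_triangle (s.1.1 : Fin d → ℤ) (t.1.1 : Fin d → ℤ)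
              (y.1 : Fin d → ℤ)
            have t3 : dist1 (t.1.1 : Fin d → ℤ) (y.1 : Fin d → ℤ)
                = dist1 (y.1 : Fin d → ℤ) (t.1.1 : Fin d → ℤ) := dist1_comm _ _
            omega
          have b1 := hBentry x i s; rw [if_pos hds] at b1
          have b2 := hBentry y j t; rw [if_pos hdt] at b2
          exact mul_le_mul (mul_le_mul b1 hM' (abs_nonneg _) (le_of_lt hγ)) b2
            (abs_nonneg _) (by positivity)
        · have b2 := hBentry y j t; rw [if_neg hdt] at b2
          have h0 : |B (y, j) t| = 0 := le_antisymm b2 (abs_nonneg _)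
          rw [h0, mul_zero, if_neg hdt, mul_zero]
      · have b1 := hBentry x i s; rw [if_neg hds] at b1
        have h0 : |B (x, i) s| = 0 := le_antisymm b1 (abs_nonneg _)
        rw [h0, zero_mul, zero_mul, if_neg hds, zero_mul, zero_mul]
    refine (Finset.sum_le_sum fun t _ => Finset.sum_le_sum fun s _ => hpt t s).trans ?_
    have hsum2 : ∀ (a : Fin d → ℤ),
        (∑ s : {z // z ∈ Λ'} × Fin 2,
          (if dist1 a (s.1.1 : Fin d → ℤ) = 1 then γ else 0)) ≤ 2 * d * (2 * γ) := by
      intro a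
      rw [Fintype.sum_prod_type]
      have hinner : ∀ z : {z // z ∈ Λ'},
          (∑ _k : Fin 2, (if dist1 a (z.1 : Fin d → ℤ) = 1 then γ else 0))
          = if dist1 a (z.1 : Fin d → ℤ) = 1 then 2 * γ else 0 := by
        intro z
        by_cases h : dist1 a (z.1 : Fin d → ℤ) = 1 <;> simp [h, Fin.sum_univ_two, two_mul]
      rw [Finset.sum_congr rfl fun z _ => hinner z]
      exact sum_nbhd_le Λ' a (by positivity)
    have hfact : (∑ t : {z // z ∈ Λ'} × Fin 2, ∑ s : {z // z ∈ Λ'} × Fin 2,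
        (if dist1 (x.1 : Fin d → ℤ) (s.1.1 : Fin d → ℤ) = 1 then γ else 0) * C8 *
        (if dist1 (y.1 : Fin d → ℤ) (t.1.1 : Fin d → ℤ) = 1 then γ else 0))
        = (∑ s : {z // z ∈ Λ'} × Fin 2,
            (if dist1 (x.1 : Fin d → ℤ) (s.1.1 : Fin d → ℤ) = 1 then γ else 0)) * C8 *
          (∑ t : {z // z ∈ Λ'} × Fin 2,
            (if dist1 (y.1 : Fin d → ℤ) (t.1.1 : Fin d → ℤ) = 1 then γ else 0)) := by
      rw [Finset.sum_comm]
      rw [Finset.sum_congr rfl fun s _ => (Finset.mul_sum _ _ _).symm]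
      rw [← Finset.sum_mul, ← Finset.sum_mul]
    rw [hfact]
    have h1 := hsum2 x.1
    have h2 := hsum2 y.1
    have hnn1 : (0:ℝ) ≤ ∑ s : {z // z ∈ Λ'} × Fin 2,
        (if dist1 (x.1 : Fin d → ℤ) (s.1.1 : Fin d → ℤ) = 1 then γ else 0) :=
      Finset.sum_nonneg fun s _ => by positivity
    have hnn2 : (0:ℝ) ≤ ∑ t : {z // z ∈ Λ'} × Fin 2,
        (if dist1 (y.1 : Fin d → ℤ) (t.1.1 : Fin d → ℤ) = 1 then γ else 0) :=
      Finset.sum_nonneg fun t _ => by positivity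
    refine mul_le_mul (mul_le_mul h1 le_rfl hC8nn (by positivity)) h2 hnn2 (by positivity)
  refine le_trans (opNorm_le_of_entries _ (by positivity) fun i j => hKey i j) ?_
  have hrq : r ≤ 16 * (d:ℝ) * γ / ε := by
    rw [hr, div_le_div_iff₀ hε hε]
    nlinarith [mul_pos hγ hε]
  have hpw : r ^ (m - 2) ≤ (16 * (d:ℝ) * γ / ε) ^ (m - 2) :=
    pow_le_pow_left₀ (le_of_lt hrpos) hrq _
  calc 2 * ((2 * d * (2 * γ)) * C8 * (2 * d * (2 * γ)))
      = (256 * (d:ℝ)^2 * γ^2 / ε) * r ^ (m - 2) := by rw [hC8]; ring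
    _ ≤ (256 * (d:ℝ)^2 * γ^2 / ε) * (16 * (d:ℝ) * γ / ε) ^ (m - 2) :=
        mul_le_mul_of_nonneg_left hpw (by positivity)
    _ = (16 * (d:ℝ) * γ / ε) ^ m * ε := by
        conv_rhs => rw [show m = (m - 2) + 2 by omega, pow_add]
        field_simp
        ring
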